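/- Let ψ(ν) = Σ_{i=1}^r |c_i|²/(δ_i - ν)² with real poles δ_1 ≤ ... ≤ δ_r < 0 not all equal, and suppose c_i ≠ 0 for some i with δ_i = δ_1 and for some i with δ_i = δ_r. Fix ν⁰ > δ_r, define α = 4ψ(ν⁰)³/ψ'(ν⁰)², β = ν⁰ + 2ψ(ν⁰)/ψ'(ν⁰), and F(ν) = α/(β - ν)². Then F(ν) < ψ(ν) for all ν > δ_r with ν ≠ ν⁰. -/

import Mathlib

open scoped BigOperators

private lemma lagrange_identity {m : ℕ} (f g : Fin m → ℝ) :
    2 * ((∑ k, f k ^ 2) * (∑ k, g k ^ 2) - (∑ k, f k * g k) ^ 2)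
      = ∑ k, ∑ l, (f k * g l - f l * g k) ^ 2 := by
  have e1 : (∑ k, f k ^ 2) * (∑ l, g l ^ 2) = ∑ k, ∑ l, f k ^ 2 * g l ^ 2 :=
    Finset.sum_mul_sum _ _ _ _
  have e2 : (∑ k, f k * g k) ^ 2 = ∑ k, ∑ l, (f k * g k) * (f l * g l) := by
    rw [sq]; exact Finset.sum_mul_sum _ _ _ _
  have e4 : (∑ k, ∑ l, f l ^ 2 * g k ^ 2) = ∑ k, ∑ l, f k ^ 2 * g l ^ 2 :=
    Finset.sum_comm
  have e3 : ∑ k, ∑ l, (f k * g l - f l * g k) ^ 2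
      = (∑ k, ∑ l, f k ^ 2 * g l ^ 2) + (∑ k, ∑ l, f l ^ 2 * g k ^ 2)
        - 2 * ∑ k, ∑ l, (f k * g k) * (f l * g l) := by
    rw [Finset.mul_sum, ← Finset.sum_add_distrib, ← Finset.sum_sub_distrib]
    refine Finset.sum_congr rfl fun k _ => ?_
    rw [Finset.mul_sum, ← Finset.sum_add_distrib, ← Finset.sum_sub_distrib]
    exact Finset.sum_congr rfl fun l _ => by ring
  rw [e1, e2, e3, e4]
  ring

/-- Strict Cauchy–Schwarz for finite sums, given a non-proportional pair. -/
private lemma strict_cauchy_schwarz {m : ℕ} (f g : Fin m → ℝ) (i j : Fin m)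
    (hij : f i * g j ≠ f j * g i) :
    (∑ k, f k * g k) ^ 2 < (∑ k, f k ^ 2) * (∑ k, g k ^ 2) := by
  have key := lagrange_identity f g
  have h1 : (f i * g j - f j * g i) ^ 2 ≤ ∑ l, (f i * g l - f l * g i) ^ 2 :=
    Finset.single_le_sum (f := fun l => (f i * g l - f l * g i) ^ 2)
      (fun l _ => sq_nonneg _) (Finset.mem_univ j)
  have h2 : (∑ l, (f i * g l - f l * g i) ^ 2) ≤ ∑ k, ∑ l, (f k * g l - f l * g k) ^ 2 :=
    Finset.single_le_sum (f := fun k => ∑ l, (f k * g l - f l * g k) ^ 2)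
      (fun k _ => Finset.sum_nonneg fun l _ => sq_nonneg _) (Finset.mem_univ i)
  have h0 : 0 < (f i * g j - f j * g i) ^ 2 :=
    pow_two_pos_of_ne_zero (sub_ne_zero.mpr hij)
  linarith

/-- The key inequality `S2³ < P · T²` via two Cauchy–Schwarz steps. -/
private lemma key_ineq {m : ℕ} (a d e : Fin m → ℝ)
    (ha : ∀ i, 0 ≤ a i) (hd : ∀ i, 0 < d i) (he : ∀ i, 0 < e i)
    (i1 ir : Fin m) (ha1 : 0 < a i1) (har : 0 < a ir)
    (hwit : e ir * d i1 ≠ e i1 * d ir) :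
    (∑ i, a i / d i ^ 2) ^ 3
      < (∑ i, a i / e i ^ 2) * (∑ i, a i * e i / d i ^ 3) ^ 2 := by
  set S2 : ℝ := ∑ i, a i / d i ^ 2 with hS2
  set T : ℝ := ∑ i, a i * e i / d i ^ 3 with hT
  set P : ℝ := ∑ i, a i / e i ^ 2 with hP
  set M : ℝ := ∑ i, a i / (d i * e i) with hM
  have hS2pos : 0 < S2 :=
    Finset.sum_pos' (fun i _ => div_nonneg (ha i) (pow_pos (hd i) 2).le)
      ⟨ir, Finset.mem_univ ir, div_pos har (pow_pos (hd ir) 2)⟩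
  have hTpos : 0 < T :=
    Finset.sum_pos' (fun i _ => div_nonneg (mul_nonneg (ha i) (he i).le) (pow_pos (hd i) 3).le)
      ⟨ir, Finset.mem_univ ir, div_pos (mul_pos har (he ir)) (pow_pos (hd ir) 3)⟩
  have hMnn : 0 ≤ M :=
    Finset.sum_nonneg fun i _ => div_nonneg (ha i) (mul_nonneg (hd i).le (he i).le)
  -- Cauchy–Schwarz (non-strict): S2² ≤ T * M
  have hA : S2 ^ 2 ≤ T * M := by
    rw [hS2, hT, hM]
    apply Finset.sum_sq_le_sum_mul_sum_of_sq_eq_mul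
    · exact fun i _ => div_nonneg (mul_nonneg (ha i) (he i).le) (pow_pos (hd i) 3).le
    · exact fun i _ => div_nonneg (ha i) (mul_nonneg (hd i).le (he i).le)
    · intro i _
      have hdne : d i ≠ 0 := (hd i).ne'
      have hene : e i ≠ 0 := (he i).ne'
      field_simp
  -- strict Cauchy–Schwarz: M² < P * S2
  have hB : M ^ 2 < P * S2 := by
    have hwit' : (Real.sqrt (a i1) / e i1) * (Real.sqrt (a ir) / d ir)
        ≠ (Real.sqrt (a ir) / e ir) * (Real.sqrt (a i1) / d i1) := by
      intro heq
      have hs1 : (0:ℝ) < Real.sqrt (a i1) := Real.sqrt_pos.mpr ha1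
      have hsr : (0:ℝ) < Real.sqrt (a ir) := Real.sqrt_pos.mpr har
      rw [div_mul_div_comm, div_mul_div_comm, mul_comm (Real.sqrt (a ir)) (Real.sqrt (a i1)),
        div_eq_div_iff (mul_pos (he i1) (hd ir)).ne' (mul_pos (he ir) (hd i1)).ne'] at heq
      have := mul_left_cancel₀ ((mul_pos hs1 hsr).ne' : Real.sqrt (a i1) * Real.sqrt (a ir) ≠ 0)
        (by linarith [heq] : Real.sqrt (a i1) * Real.sqrt (a ir) * (e ir * d i1)
            = Real.sqrt (a i1) * Real.sqrt (a ir) * (e i1 * d ir))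
      exact hwit this
    have h := strict_cauchy_schwarz (fun i => Real.sqrt (a i) / e i)
      (fun i => Real.sqrt (a i) / d i) i1 ir hwit'
    have hfg : ∀ i : Fin m,
        (Real.sqrt (a i) / e i) * (Real.sqrt (a i) / d i) = a i / (d i * e i) := by
      intro i
      rw [div_mul_div_comm, Real.mul_self_sqrt (ha i), mul_comm (e i) (d i)]
    have hf2 : ∀ i : Fin m, (Real.sqrt (a i) / e i) ^ 2 = a i / e i ^ 2 := fun i => by
      rw [div_pow, Real.sq_sqrt (ha i)]
    have hg2 : ∀ i : Fin m, (Real.sqrt (a i) / d i) ^ 2 = a i / d i ^ 2 := fun i => by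
      rw [div_pow, Real.sq_sqrt (ha i)]
    calc M ^ 2
        = (∑ i, (Real.sqrt (a i) / e i) * (Real.sqrt (a i) / d i)) ^ 2 := by
          rw [hM]; congr 1; exact Finset.sum_congr rfl fun i _ => (hfg i).symm
      _ < (∑ i, (Real.sqrt (a i) / e i) ^ 2) * (∑ i, (Real.sqrt (a i) / d i) ^ 2) := h
      _ = P * S2 := by
          rw [hP, hS2]
          congr 1
          · exact Finset.sum_congr rfl fun i _ => hf2 i
          · exact Finset.sum_congr rfl fun i _ => hg2 i
  -- combine:  S2⁴ ≤ T²M² < T²·P·S2  ⇒  S2³ < P·T²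
  have h3 : S2 ^ 2 * S2 ^ 2 ≤ (T * M) * (T * M) := mul_self_le_mul_self (sq_nonneg S2) hA
  have h4 : T ^ 2 * M ^ 2 < T ^ 2 * (P * S2) := by
    exact mul_lt_mul_of_pos_left hB (pow_pos hTpos 2)
  nlinarith [h3, h4, hS2pos]

/-- Theorem 1 (bounding property): `F(ν) = α/(β-ν)² < ψ(ν)` for all
`ν > δ_r` with `ν ≠ ν⁰`، where `ψ(ν) = Σᵢ |cᵢ|²/(δᵢ - ν)²` has poles
`δ₁ ≤ … ≤ δ_r < 0` not all equal, `c` is nonzero at the smallest and at the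
largest pole, and `α, β` come from interpolation at `ν⁰ > δ_r`. -/
theorem rational_approx_lower_bounding
    (n : ℕ) (δ : Fin (n+1) → ℝ) (c : Fin (n+1) → ℂ)
    (hmono : Monotone δ) (hneg : ∀ i, δ i < 0)
    (hnotall : ∃ i j, δ i ≠ δ j)
    (hc1 : ∃ i, δ i = δ 0 ∧ c i ≠ 0)
    (hcr : ∃ i, δ i = δ (Fin.last n) ∧ c i ≠ 0)
    (ψ : ℝ → ℝ) (hψ : ψ = fun ν => ∑ i, ‖c i‖^2 / (δ i - ν)^2)
    (ν0 : ℝ) (hν0 : δ (Fin.last n) < ν0)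
    (α β : ℝ) (hα : α = 4 * (ψ ν0)^3 / (deriv ψ ν0)^2)
    (hβ : β = ν0 + 2 * ψ ν0 / deriv ψ ν0) :
    ∀ ν : ℝ, δ (Fin.last n) < ν → ν ≠ ν0 → α / (β - ν)^2 < ψ ν := by
  intro ν hν hne
  obtain ⟨i1, hi1δ, hi1c⟩ := hc1
  obtain ⟨ir, hirδ, hirc⟩ := hcr
  -- the two extreme poles are distinct
  have hδlt : δ 0 < δ (Fin.last n) := by
    rcases lt_or_eq_of_le (hmono (Fin.zero_le (Fin.last n))) with h | h
    · exact h
    · exfalso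
      obtain ⟨i, j, hij⟩ := hnotall
      have hi : δ i = δ 0 :=
        le_antisymm (h ▸ hmono (Fin.le_last i)) (hmono (Fin.zero_le i))
      have hj : δ j = δ 0 :=
        le_antisymm (h ▸ hmono (Fin.le_last j)) (hmono (Fin.zero_le j))
      exact hij (hi.trans hj.symm)
  have hai1 : 0 < ‖c i1‖^2 := by
    have : ‖c i1‖ ≠ 0 := norm_ne_zero_iff.mpr hi1c
    positivity
  have hair : 0 < ‖c ir‖^2 := by
    have : ‖c ir‖ ≠ 0 := norm_ne_zero_iff.mpr hirc
    positivity
  have hd : ∀ i, 0 < ν0 - δ i := fun i => by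
    have := hmono (Fin.le_last i); linarith
  have he : ∀ i, 0 < ν - δ i := fun i => by
    have := hmono (Fin.le_last i); linarith
  -- sums
  set S2 : ℝ := ∑ i, ‖c i‖^2 / (ν0 - δ i) ^ 2 with hS2
  set S3 : ℝ := ∑ i, ‖c i‖^2 / (ν0 - δ i) ^ 3 with hS3
  set T : ℝ := ∑ i, ‖c i‖^2 * (ν - δ i) / (ν0 - δ i) ^ 3 with hT
  set P : ℝ := ∑ i, ‖c i‖^2 / (ν - δ i) ^ 2 with hP
  have hS2pos : 0 < S2 := by
    rw [hS2]
    exact Finset.sum_pos' (fun i _ => div_nonneg (sq_nonneg _) (pow_pos (hd i) 2).le)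
      ⟨ir, Finset.mem_univ ir, div_pos hair (pow_pos (hd ir) 2)⟩
  have hS3pos : 0 < S3 := by
    rw [hS3]
    exact Finset.sum_pos' (fun i _ => div_nonneg (sq_nonneg _) (pow_pos (hd i) 3).le)
      ⟨ir, Finset.mem_univ ir, div_pos hair (pow_pos (hd ir) 3)⟩
  have hTpos : 0 < T := by
    rw [hT]
    exact Finset.sum_pos'
      (fun i _ => div_nonneg (mul_nonneg (sq_nonneg _) (he i).le) (pow_pos (hd i) 3).le)
      ⟨ir, Finset.mem_univ ir, div_pos (mul_pos hair (he ir)) (pow_pos (hd ir) 3)⟩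
  -- values of ψ at ν0 and ν
  have hψν0 : ψ ν0 = S2 := by
    rw [hψ, hS2]
    exact Finset.sum_congr rfl fun i _ => by rw [show (δ i - ν0)^2 = (ν0 - δ i)^2 by ring]
  have hψν : ψ ν = P := by
    rw [hψ, hP]
    exact Finset.sum_congr rfl fun i _ => by rw [show (δ i - ν)^2 = (ν - δ i)^2 by ring]
  -- derivative of ψ at ν0
  have hderiv : deriv ψ ν0 = -2 * S3 := by
    have hder : HasDerivAt ψ (∑ i, -(2 * ‖c i‖^2 / (ν0 - δ i)^3)) ν0 := by
      rw [hψ]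
      apply HasDerivAt.fun_sum
      intro i _
      have hne0 : (δ i - ν0) ≠ 0 := by have := hd i; intro h; linarith
      have h1 : HasDerivAt (fun ν : ℝ => δ i - ν) (-1) ν0 := by
        simpa using (hasDerivAt_id ν0).const_sub (δ i)
      have h2 := h1.fun_pow 2
      have h3 := (hasDerivAt_const ν0 (‖c i‖^2)).fun_div h2 (pow_ne_zero 2 hne0)
      refine h3.congr_deriv ?_
      have hne0' : (ν0 - δ i) ≠ 0 := (hd i).ne'
      field_simp
      ring
    rw [hder.deriv, hS3, Finset.mul_sum]
    exact Finset.sum_congr rfl fun i _ => by ring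
  -- β - ν and α in terms of the sums
  have hS3ne : S3 ≠ 0 := hS3pos.ne'
  have hβν : β - ν = -T / S3 := by
    rw [hβ, hψν0, hderiv]
    have key : (ν0 - ν) * S3 - S2 = -T := by
      rw [hS3, hS2, hT, Finset.mul_sum, ← Finset.sum_sub_distrib, ← Finset.sum_neg_distrib]
      refine Finset.sum_congr rfl fun i _ => ?_
      have hdne : (ν0 - δ i) ≠ 0 := (hd i).ne'
      field_simp
      ring
    field_simp
    linear_combination key
  have hα' : α = S2 ^ 3 / S3 ^ 2 := by
    rw [hα, hψν0, hderiv]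
    rw [show (-2 * S3)^2 = 4 * S3^2 by ring]
    rw [show (4:ℝ) * S2^3 / (4 * S3^2) = S2^3 / S3^2 by field_simp]
  have hTne : T ≠ 0 := hTpos.ne'
  have hLHS : α / (β - ν)^2 = S2 ^ 3 / T ^ 2 := by
    rw [hβν, hα']
    field_simp
  rw [hLHS, hψν]
  rw [div_lt_iff₀ (pow_pos hTpos 2)]
  -- the key inequality, with the non-proportionality witness
  have hwit : (ν - δ ir) * (ν0 - δ i1) ≠ (ν - δ i1) * (ν0 - δ ir) := by
    intro heq
    have hzero : (δ (Fin.last n) - δ 0) * (ν0 - ν) = 0 := by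
      rw [hi1δ, hirδ] at heq
      linear_combination -heq
    rcases mul_eq_zero.1 hzero with h | h
    · linarith
    · exact hne (by linarith)
  have := key_ineq (fun i => ‖c i‖^2) (fun i => ν0 - δ i) (fun i => ν - δ i)
    (fun i => sq_nonneg _) hd he i1 ir hai1 hair hwit
  rw [← hS2, ← hP, ← hT] at this
  linarith [this]
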